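/- Let $1 \le q \le p \le \infty$ and $\phi \in \mathcal{G}_{q,p}$. There exists a constant $C > 0$ such that for every measurable function $f : \mathbb{R}^d \to \mathbb{C}$, $C^{-1}\, \widetilde{\|f\|}_{(L^q,L^p)^\phi} \le \|f\|_{(L^q,L^p)^\phi} \le C\, \widetilde{\|f\|}_{(L^q,L^p)^\phi}$, where $\widetilde{\|f\|}_{(L^q,L^p)^\phi} = \sup_{r>0} \frac{1}{\phi(r)} r^{-d/q}\, {}_{r}\widetilde{\|f\|}_{q,p}$. -/

import Mathlib

open MeasureTheory ENNReal Set Metric Filter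

noncomputable section

/-- Shorthand for the Euclidean space `ℝ^d`. -/
abbrev Rd (d : ℕ) := EuclideanSpace ℝ (Fin d)

/-- The `L^p` "norm" (with values in `ℝ≥0∞`) of an `ℝ≥0∞`-valued function. -/
def eLpNormE {α : Type*} [MeasurableSpace α] (g : α → ℝ≥0∞) (p : ℝ≥0∞) (μ : Measure α) :
    ℝ≥0∞ :=
  if p = ∞ then essSup g μ else (∫⁻ x, g x ^ p.toReal ∂μ) ^ (1 / p.toReal)

/-- The discrete `ℓ^p` norm of an `ℝ≥0∞`-valued family. -/
def lpNormE {ι : Type*} (a : ι → ℝ≥0∞) (p : ℝ≥0∞) : ℝ≥0∞ :=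
  if p = ∞ then ⨆ k, a k else (∑' k, a k ^ p.toReal) ^ (1 / p.toReal)

/-- The continuous amalgam norm `‖f‖_{q,p,r}` of `f : ℝ^d → E`:
the `L^p` norm (in `y`) of `y ↦ ‖f · χ_{B(y,r)}‖_{L^q}`. -/
def contAmalgam (d : ℕ) {E : Type*} [NormedAddCommGroup E] (f : Rd d → E)
    (q p : ℝ≥0∞) (r : ℝ) : ℝ≥0∞ :=
  eLpNormE (fun y => eLpNorm ((Metric.ball y r).indicator f) q volume) p volume

/-- The continuous amalgam norm of an `ℝ≥0∞`-valued function. -/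
def contAmalgamE (d : ℕ) (g : Rd d → ℝ≥0∞) (q p : ℝ≥0∞) (r : ℝ) : ℝ≥0∞ :=
  eLpNormE (fun y => eLpNormE ((Metric.ball y r).indicator g) q volume) p volume

/-- The half-open cube `Q_k^r = ∏_i [r kᵢ, r (kᵢ + 1))` indexed by `k ∈ ℤ^d`. -/
def unitCube (d : ℕ) (r : ℝ) (k : Fin d → ℤ) : Set (Rd d) :=
  {x | ∀ i, r * k i ≤ x i ∧ x i < r * (k i + 1)}

/-- The discrete amalgam norm: the `ℓ^p` norm over `k ∈ ℤ^d` of `‖f χ_{Q_k^r}‖_{L^q}`. -/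
def discAmalgam (d : ℕ) {E : Type*} [NormedAddCommGroup E] (f : Rd d → E)
    (q p : ℝ≥0∞) (r : ℝ) : ℝ≥0∞ :=
  lpNormE (fun k : Fin d → ℤ => eLpNorm ((unitCube d r k).indicator f) q volume) p

/-- The class `𝒢_{q,p}` of weight functions: `φ` is positive and measurable on `(0,∞)`,
`t ↦ t^{d/p} φ(t)` is almost decreasing and `t ↦ t^{d/q} φ(t)` is almost increasing
(with the convention `1/∞ = 0`). -/
structure IsGqp (d : ℕ) (q p : ℝ≥0∞) (φ : ℝ → ℝ) : Prop where
  measurable : Measurable φ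
  pos : ∀ t : ℝ, 0 < t → 0 < φ t
  almost_decreasing : ∃ C : ℝ, 0 < C ∧ ∀ r s : ℝ, 0 < r → r ≤ s →
    s ^ ((d : ℝ) * (1 / p).toReal) * φ s ≤ C * (r ^ ((d : ℝ) * (1 / p).toReal) * φ r)
  almost_increasing : ∃ C : ℝ, 0 < C ∧ ∀ r s : ℝ, 0 < r → r ≤ s →
    r ^ ((d : ℝ) * (1 / q).toReal) * φ r ≤ C * (s ^ ((d : ℝ) * (1 / q).toReal) * φ s)

/-- The generalized Fofana norm
`‖f‖_{(L^q,L^p)^φ} = sup_{r>0} φ(r)⁻¹ r^{d(-1/q - 1/p)} ‖f‖_{q,p,r}`. -/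
def fofanaNorm (d : ℕ) {E : Type*} [NormedAddCommGroup E] (f : Rd d → E)
    (q p : ℝ≥0∞) (φ : ℝ → ℝ) : ℝ≥0∞ :=
  ⨆ r : {r : ℝ // 0 < r},
    ENNReal.ofReal ((φ r)⁻¹ * (r : ℝ) ^ ((d : ℝ) * (-(1 / q).toReal - (1 / p).toReal))) *
      contAmalgam d f q p r

/-- The generalized Fofana norm of an `ℝ≥0∞`-valued function. -/
def fofanaNormE (d : ℕ) (g : Rd d → ℝ≥0∞) (q p : ℝ≥0∞) (φ : ℝ → ℝ) : ℝ≥0∞ :=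
  ⨆ r : {r : ℝ // 0 < r},
    ENNReal.ofReal ((φ r)⁻¹ * (r : ℝ) ^ ((d : ℝ) * (-(1 / q).toReal - (1 / p).toReal))) *
      contAmalgamE d g q p r

/-- The discrete variant of the generalized Fofana norm,
`sup_{r>0} φ(r)⁻¹ r^{-d/q} ‖f‖~_{q,p,r}`. -/
def fofanaNormDisc (d : ℕ) {E : Type*} [NormedAddCommGroup E] (f : Rd d → E)
    (q p : ℝ≥0∞) (φ : ℝ → ℝ) : ℝ≥0∞ :=
  ⨆ r : {r : ℝ // 0 < r},
    ENNReal.ofReal ((φ r)⁻¹ * (r : ℝ) ^ (-(d : ℝ) * (1 / q).toReal)) *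
      discAmalgam d f q p r

/-- The Hardy–Littlewood maximal function (with values in `ℝ≥0∞`). -/
def hlMax (d : ℕ) {E : Type*} [NormedAddCommGroup E] (f : Rd d → E) (x : Rd d) : ℝ≥0∞ :=
  ⨆ r : {r : ℝ // 0 < r},
    (volume (Metric.ball x (r : ℝ)))⁻¹ * ∫⁻ y in Metric.ball x (r : ℝ), (‖f y‖₊ : ℝ≥0∞)

namespace FofanaProof
variable {d : ℕ} {r : ℝ}

def fl (r : ℝ) (y : Rd d) : Fin d → ℤ := fun i => ⌊y i / r⌋

lemma mem_unitCube_fl (hr : 0 < r) (y : Rd d) : y ∈ unitCube d r (fl r y) := by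
  intro i
  have h1 : r * (⌊y i / r⌋ : ℝ) ≤ r * (y i / r) :=
    mul_le_mul_of_nonneg_left (Int.floor_le _) hr.le
  have h2 : r * (y i / r) < r * ((⌊y i / r⌋ : ℝ) + 1) :=
    mul_lt_mul_of_pos_left (Int.lt_floor_add_one _) hr
  have h3 : r * (y i / r) = y i := by field_simp
  constructor
  · rw [h3] at h1; exact h1
  · rw [h3] at h2; push_cast; exact h2

lemma fl_eq (hr : 0 < r) {k : Fin d → ℤ} {x : Rd d} (hx : x ∈ unitCube d r k) :
    fl r x = k := by
  funext i
  have h := hx i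
  have h1 : (k i : ℝ) ≤ x i / r := by
    rw [le_div_iff₀ hr]; linarith [h.1]
  have h2 : x i / r < k i + 1 := by
    rw [div_lt_iff₀ hr]; push_cast; linarith [h.2]
  exact Int.floor_eq_iff.mpr ⟨h1, by push_cast; exact h2⟩

lemma iUnion_unitCube (hr : 0 < r) : (⋃ k : Fin d → ℤ, unitCube d r k) = univ :=
  eq_univ_of_forall fun y => mem_iUnion.mpr ⟨fl r y, mem_unitCube_fl hr y⟩

lemma pairwise_disjoint_unitCube (hr : 0 < r) :
    Pairwise (Function.onFun Disjoint fun k : Fin d → ℤ => unitCube d r k) := by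
  intro k l hkl
  rw [Function.onFun, Set.disjoint_left]
  intro x hxk hxl
  exact hkl ((fl_eq hr hxk).symm.trans (fl_eq hr hxl))

lemma unitCube_eq_preimage (k : Fin d → ℤ) :
    unitCube d r k = (MeasurableEquiv.toLp 2 (Fin d → ℝ)).symm ⁻¹'
      (univ.pi fun i => Ico (r * k i) (r * (k i + 1))) := by
  ext x
  simp only [unitCube, mem_preimage, Set.mem_univ_pi, mem_Ico, mem_setOf_eq]
  rfl

lemma measurableSet_unitCube (k : Fin d → ℤ) : MeasurableSet (unitCube d r k) := by
  rw [unitCube_eq_preimage]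
  exact (MeasurableEquiv.toLp 2 (Fin d → ℝ)).symm.measurable
    (MeasurableSet.univ_pi fun i => measurableSet_Ico)

lemma volume_unitCube (hr : 0 < r) (k : Fin d → ℤ) :
    volume (unitCube d r k) = ENNReal.ofReal r ^ d := by
  rw [unitCube_eq_preimage,
    (EuclideanSpace.volume_preserving_symm_measurableEquiv_toLp (Fin d)).measure_preimage
      ((MeasurableSet.univ_pi fun i => measurableSet_Ico).nullMeasurableSet),
    volume_pi_pi]
  have : ∀ i : Fin d, volume (Ico (r * k i) (r * (k i + 1))) = ENNReal.ofReal r := by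
    intro i; rw [Real.volume_Ico]; congr 1; ring
  simp [this]

lemma lintegral_eq_tsum_cubes (hr : 0 < r) (g : Rd d → ℝ≥0∞) :
    ∫⁻ x, g x = ∑' k : Fin d → ℤ, ∫⁻ x in unitCube d r k, g x := by
  conv_lhs => rw [← setLIntegral_univ, ← iUnion_unitCube hr]
  rw [Measure.restrict_iUnion (pairwise_disjoint_unitCube hr) measurableSet_unitCube,
    lintegral_sum_measure]

lemma measurable_coord (i : Fin d) : Measurable fun x : Rd d => x i :=
  (measurable_pi_apply i).comp (MeasurableEquiv.toLp 2 (Fin d → ℝ)).symm.measurable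

lemma measurable_fl (r : ℝ) : Measurable (fl (d := d) r) :=
  measurable_pi_lambda _ fun i => ((measurable_coord i).div_const r).floor

lemma abs_coord_le_dist (x y : Rd d) (i : Fin d) : |x i - y i| ≤ dist x y := by
  rw [EuclideanSpace.dist_eq]
  have h : dist (x i) (y i) ^ 2 ≤ ∑ j, dist (x j) (y j) ^ 2 :=
    Finset.single_le_sum (f := fun j => dist (x j) (y j) ^ 2)
      (fun _ _ => sq_nonneg _) (Finset.mem_univ i)
  calc |x i - y i| = dist (x i) (y i) := (Real.dist_eq _ _).symm
    _ = Real.sqrt (dist (x i) (y i) ^ 2) := (Real.sqrt_sq dist_nonneg).symm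
    _ ≤ _ := Real.sqrt_le_sqrt h

lemma dist_lt_of_mem_unitCube (hr : 0 < r) {k : Fin d → ℤ} {x y : Rd d}
    (hx : x ∈ unitCube d r k) (hy : y ∈ unitCube d r k) :
    dist x y < r * (Real.sqrt d + 1) := by
  have hcoord : ∀ i, dist (x i) (y i) ^ 2 ≤ r ^ 2 := by
    intro i
    have h1 := hx i; have h2 := hy i
    have : |x i - y i| ≤ r := by
      rw [abs_le]; constructor <;> nlinarith [h1.1, h1.2, h2.1, h2.2]
    calc dist (x i) (y i) ^ 2 = |x i - y i| ^ 2 := by rw [Real.dist_eq]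
      _ ≤ r ^ 2 := by nlinarith [abs_nonneg (x i - y i), sq_abs (x i - y i)]
  have h2 : dist x y ≤ Real.sqrt d * r := by
    rw [EuclideanSpace.dist_eq]
    calc Real.sqrt (∑ i, dist (x i) (y i) ^ 2) ≤ Real.sqrt (∑ _i : Fin d, r ^ 2) :=
        Real.sqrt_le_sqrt (Finset.sum_le_sum fun i _ => hcoord i)
      _ = Real.sqrt d * r := by
        rw [Finset.sum_const, Finset.card_univ, Fintype.card_fin, nsmul_eq_mul,
          Real.sqrt_mul (by positivity), Real.sqrt_sq hr.le]
  calc dist x y ≤ Real.sqrt d * r := h2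
    _ < r * (Real.sqrt d + 1) := by nlinarith [Real.sqrt_nonneg (d : ℝ)]


section ELP
variable {α : Type*} [MeasurableSpace α] {μ : Measure α} {p q : ℝ≥0∞}

lemma one_le_toReal (hp : 1 ≤ p) (hp' : p ≠ ∞) : 1 ≤ p.toReal := by
  have := ENNReal.toReal_mono hp' hp
  simpa using this

lemma eLpNormE_mono {g h : α → ℝ≥0∞} (hgh : ∀ x, g x ≤ h x) :
    eLpNormE g p μ ≤ eLpNormE h p μ := by
  unfold eLpNormE
  split
  · exact essSup_mono_ae (Filter.Eventually.of_forall hgh)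
  · exact ENNReal.rpow_le_rpow
      (lintegral_mono fun x => ENNReal.rpow_le_rpow (hgh x) toReal_nonneg)
      (by positivity)

lemma eLpNormE_zero (hp : 1 ≤ p) : eLpNormE (fun _ => (0 : ℝ≥0∞)) p μ = 0 := by
  unfold eLpNormE
  split
  · exact le_antisymm (essSup_le_of_ae_le 0 (Filter.Eventually.of_forall fun _ => le_rfl))
      zero_le
  · rename_i hptop
    have h1 : 0 < p.toReal := lt_of_lt_of_le zero_lt_one (one_le_toReal hp hptop)
    rw [show (fun _ : α => (0:ℝ≥0∞) ^ p.toReal) = fun _ => 0 by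
      funext x; exact ENNReal.zero_rpow_of_pos h1]
    simp only [lintegral_const, zero_mul, ENNReal.zero_rpow_of_pos (div_pos zero_lt_one h1)]

lemma eLpNormE_add_le {g h : α → ℝ≥0∞} (hg : AEMeasurable g μ) (hh : AEMeasurable h μ)
    (hp : 1 ≤ p) :
    eLpNormE (fun x => g x + h x) p μ ≤ eLpNormE g p μ + eLpNormE h p μ := by
  unfold eLpNormE
  split
  · refine essSup_le_of_ae_le _ ?_
    filter_upwards [ENNReal.ae_le_essSup g (μ := μ), ENNReal.ae_le_essSup h (μ := μ)]
      with x h1 h2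
    exact add_le_add h1 h2
  · rename_i hptop
    exact ENNReal.lintegral_Lp_add_le hg hh (one_le_toReal hp hptop)

lemma eLpNormE_sum_le {ι : Type*} (s : Finset ι) (g : ι → α → ℝ≥0∞)
    (hg : ∀ i, Measurable (g i)) (hp : 1 ≤ p) :
    eLpNormE (fun x => ∑ i ∈ s, g i x) p μ ≤ ∑ i ∈ s, eLpNormE (g i) p μ := by
  classical
  induction s using Finset.induction_on with
  | empty => simp only [Finset.sum_empty]; exact le_of_eq (eLpNormE_zero hp)
  | insert a s hi ih =>
    simp only [Finset.sum_insert hi]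
    calc eLpNormE (fun x => g a x + ∑ i ∈ s, g i x) p μ
        ≤ eLpNormE (g a) p μ + eLpNormE (fun x => ∑ i ∈ s, g i x) p μ :=
          eLpNormE_add_le (hg a).aemeasurable
            (Finset.measurable_sum s fun i _ => hg i).aemeasurable hp
      _ ≤ _ := add_le_add_right ih _

lemma eLpNorm_eq_eLpNormE {E : Type*} [NormedAddCommGroup E] (f : α → E) (hq : 1 ≤ q) :
    eLpNorm f q μ = eLpNormE (fun x => (‖f x‖₊ : ℝ≥0∞)) q μ := by
  unfold eLpNormE
  split
  · rename_i hqt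
    rw [hqt, eLpNorm_exponent_top, eLpNormEssSup]; rfl
  · rename_i hqt
    rw [eLpNorm_eq_lintegral_rpow_enorm_toReal (lt_of_lt_of_le zero_lt_one hq).ne' hqt]; rfl

lemma enn_indicator_comm {E : Type*} [NormedAddCommGroup E] (s : Set α) (f : α → E) :
    (fun x => (‖s.indicator f x‖₊ : ℝ≥0∞)) = s.indicator (fun x => (‖f x‖₊ : ℝ≥0∞)) := by
  funext x
  by_cases hx : x ∈ s <;> simp [Set.indicator, hx]

lemma le_essSup_of_pos {g : α → ℝ≥0∞} {s : Set α} (hs : μ s ≠ 0) {c : ℝ≥0∞}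
    (h : ∀ y ∈ s, c ≤ g y) : c ≤ essSup g μ := by
  have h2 := ENNReal.ae_le_essSup g (μ := μ)
  by_contra hc
  push_neg at hc
  have hsub : s ⊆ {y | ¬ g y ≤ essSup g μ} := fun y hy =>
    fun hle => absurd (lt_of_lt_of_le hc (le_trans (h y hy) hle)) (lt_irrefl _)
  exact hs (measure_mono_null hsub (ae_iff.mp h2))

end ELP

section Steps
variable {d : ℕ} {r : ℝ} {q p : ℝ≥0∞}

/-- The index window `{-1,0,1}^d`. -/
def J (d : ℕ) : Finset (Fin d → ℤ) := Fintype.piFinset fun _ => Finset.Icc (-1 : ℤ) 1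

lemma card_J : (J d).card = 3 ^ d := by
  simp [J, Fintype.card_piFinset, Int.card_Icc]

lemma one_div_toReal (p : ℝ≥0∞) : ((1 : ℝ≥0∞) / p).toReal = 1 / p.toReal := by
  rw [one_div, ENNReal.toReal_inv, one_div]

lemma indicator_ball_le_sum (hr : 0 < r) (G : Rd d → ℝ≥0∞) (y x : Rd d) :
    (Metric.ball y r).indicator G x
      ≤ ∑ j ∈ J d, (unitCube d r (fl r y + j)).indicator G x := by
  by_cases hx : x ∈ Metric.ball y r
  · have hxk : x ∈ unitCube d r (fl r x) := mem_unitCube_fl hr x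
    have hy : y ∈ unitCube d r (fl r y) := mem_unitCube_fl hr y
    have hjJ : fl r x - fl r y ∈ J d := by
      rw [J, Fintype.mem_piFinset]
      intro i
      rw [Finset.mem_Icc]
      have hd : |x i - y i| < r := lt_of_le_of_lt (abs_coord_le_dist x y i) (mem_ball.mp hx)
      have h1 := hxk i
      have h2 := hy i
      have habs := abs_lt.mp hd
      constructor
      · by_contra hcon
        push_neg at hcon
        have hint : fl r x i + 1 ≤ fl r y i - 1 := by
          simp only [Pi.sub_apply] at hcon; omega
        have hcast : ((fl r x i : ℝ) + 1) ≤ (fl r y i : ℝ) - 1 := by exact_mod_cast hint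
        have hmul := mul_le_mul_of_nonneg_left hcast hr.le
        nlinarith [h1.2, h2.1, habs.1]
      · by_contra hcon
        push_neg at hcon
        have hint : fl r y i + 1 ≤ fl r x i - 1 := by
          simp only [Pi.sub_apply] at hcon; omega
        have hcast : ((fl r y i : ℝ) + 1) ≤ (fl r x i : ℝ) - 1 := by exact_mod_cast hint
        have hmul := mul_le_mul_of_nonneg_left hcast hr.le
        nlinarith [h1.1, h2.2, habs.2]
    have hxcube : x ∈ unitCube d r (fl r y + (fl r x - fl r y)) := by
      rwa [add_sub_cancel]
    calc (Metric.ball y r).indicator G x = G x := indicator_of_mem hx G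
      _ = (unitCube d r (fl r y + (fl r x - fl r y))).indicator G x :=
        (indicator_of_mem hxcube G).symm
      _ ≤ _ := Finset.single_le_sum
          (f := fun j => (unitCube d r (fl r y + j)).indicator G x)
          (fun _ _ => zero_le) hjJ
  · simp [indicator_of_notMem hx]

lemma stepA (hq1 : 1 ≤ q) (hp1 : 1 ≤ p) (hr : 0 < r) {G : Rd d → ℝ≥0∞}
    (hGm : Measurable G) :
    contAmalgamE d G q p r
      ≤ (3 ^ d : ℝ≥0∞) * (ENNReal.ofReal r ^ ((d : ℝ) * ((1 : ℝ≥0∞) / p).toReal) *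
          lpNormE (fun k => eLpNormE ((unitCube d r k).indicator G) q volume) p) := by
  set A : (Fin d → ℤ) → ℝ≥0∞ :=
    fun k => eLpNormE ((unitCube d r k).indicator G) q volume with hA
  have hAm : ∀ j : Fin d → ℤ, Measurable fun y : Rd d => A (fl r y + j) := fun j =>
    (measurable_of_countable fun k => A (k + j)).comp (measurable_fl r)
  have step1 : contAmalgamE d G q p r
      ≤ eLpNormE (fun y => ∑ j ∈ J d, A (fl r y + j)) p volume := by
    unfold contAmalgamE
    apply eLpNormE_mono
    intro y
    calc eLpNormE ((Metric.ball y r).indicator G) q volume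
        ≤ eLpNormE (fun x => ∑ j ∈ J d, (unitCube d r (fl r y + j)).indicator G x) q volume :=
          eLpNormE_mono (indicator_ball_le_sum hr G y)
      _ ≤ ∑ j ∈ J d, A (fl r y + j) :=
          eLpNormE_sum_le (J d) _
            (fun j => hGm.indicator (measurableSet_unitCube _)) hq1
  have step3 : ∀ j : Fin d → ℤ,
      eLpNormE (fun y => A (fl r y + j)) p volume
        ≤ ENNReal.ofReal r ^ ((d : ℝ) * ((1 : ℝ≥0∞) / p).toReal) * lpNormE A p := by
    intro j
    by_cases hptop : p = ∞
    · subst hptop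
      rw [show ((d : ℝ) * ((1 : ℝ≥0∞) / ∞).toReal) = 0 by simp, ENNReal.rpow_zero, one_mul]
      unfold eLpNormE lpNormE
      rw [if_pos rfl, if_pos rfl]
      exact essSup_le_of_ae_le _
        (Filter.Eventually.of_forall fun y => le_iSup A (fl r y + j))
    · have hpt : 1 ≤ p.toReal := one_le_toReal hp1 hptop
      have hpt0 : 0 < p.toReal := lt_of_lt_of_le zero_lt_one hpt
      unfold eLpNormE lpNormE
      rw [if_neg hptop, if_neg hptop]
      have hint : (∫⁻ y, A (fl r y + j) ^ p.toReal)
          = (∑' k : Fin d → ℤ, A k ^ p.toReal) * ENNReal.ofReal r ^ d := by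
        rw [lintegral_eq_tsum_cubes hr]
        have hterm : ∀ k : Fin d → ℤ,
            (∫⁻ y in unitCube d r k, A (fl r y + j) ^ p.toReal)
              = A (k + j) ^ p.toReal * ENNReal.ofReal r ^ d := by
          intro k
          rw [setLIntegral_congr_fun (measurableSet_unitCube k)
            (fun y hy => by rw [fl_eq hr hy]),
            setLIntegral_const, volume_unitCube hr]
        rw [tsum_congr hterm, ENNReal.tsum_mul_right]
        congr 1
        exact (Equiv.addRight j).tsum_eq fun k => A k ^ p.toReal
      rw [hint, ENNReal.mul_rpow_of_nonneg _ _ (by positivity),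
        ← ENNReal.rpow_natCast (ENNReal.ofReal r) d, ← ENNReal.rpow_mul,
        one_div_toReal, mul_comm]
  calc contAmalgamE d G q p r
      ≤ eLpNormE (fun y => ∑ j ∈ J d, A (fl r y + j)) p volume := step1
    _ ≤ ∑ j ∈ J d, eLpNormE (fun y => A (fl r y + j)) p volume :=
        eLpNormE_sum_le (J d) _ (fun j => hAm j) hp1
    _ ≤ ∑ _j ∈ J d, ENNReal.ofReal r ^ ((d : ℝ) * ((1 : ℝ≥0∞) / p).toReal) * lpNormE A p :=
        Finset.sum_le_sum fun j _ => step3 j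
    _ = (3 ^ d : ℝ≥0∞) * (ENNReal.ofReal r ^ ((d : ℝ) * ((1 : ℝ≥0∞) / p).toReal) *
          lpNormE A p) := by
        rw [Finset.sum_const, card_J, nsmul_eq_mul]
        norm_num

lemma stepB (hp1 : 1 ≤ p) (hr : 0 < r) (G : Rd d → ℝ≥0∞) :
    ENNReal.ofReal r ^ ((d : ℝ) * ((1 : ℝ≥0∞) / p).toReal) *
        lpNormE (fun k => eLpNormE ((unitCube d r k).indicator G) q volume) p
      ≤ contAmalgamE d G q p (r * (Real.sqrt d + 1)) := by
  set R : ℝ := r * (Real.sqrt d + 1) with hR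
  set A : (Fin d → ℤ) → ℝ≥0∞ :=
    fun k => eLpNormE ((unitCube d r k).indicator G) q volume with hA
  set B : Rd d → ℝ≥0∞ :=
    fun y => eLpNormE ((Metric.ball y R).indicator G) q volume with hB
  have hcontE : contAmalgamE d G q p R = eLpNormE B p volume := by rw [hB]; rfl
  have hsub : ∀ k : Fin d → ℤ, ∀ y ∈ unitCube d r k, A k ≤ B y := by
    intro k y hy
    rw [hA, hB]
    apply eLpNormE_mono
    intro x
    by_cases hx : x ∈ unitCube d r k
    · rw [indicator_of_mem hx,
        indicator_of_mem (mem_ball.mpr (dist_lt_of_mem_unitCube hr hx hy))]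
    · rw [indicator_of_notMem hx]
      exact zero_le
  have hvol : ∀ k : Fin d → ℤ, volume (unitCube d r k) ≠ 0 := fun k => by
    rw [volume_unitCube hr]
    exact pow_ne_zero _ (ENNReal.ofReal_pos.mpr hr).ne'
  rw [hcontE]
  by_cases hptop : p = ∞
  · subst hptop
    rw [show ((d : ℝ) * ((1 : ℝ≥0∞) / ∞).toReal) = 0 by simp, ENNReal.rpow_zero, one_mul]
    unfold eLpNormE lpNormE
    rw [if_pos rfl, if_pos rfl]
    exact iSup_le fun k => le_essSup_of_pos (hvol k) (hsub k)
  · have hpt : 1 ≤ p.toReal := one_le_toReal hp1 hptop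
    have hpt0 : 0 < p.toReal := lt_of_lt_of_le zero_lt_one hpt
    unfold eLpNormE lpNormE
    rw [if_neg hptop, if_neg hptop]
    have key : ∀ k : Fin d → ℤ,
        A k ^ p.toReal * ENNReal.ofReal r ^ d ≤ ∫⁻ y in unitCube d r k, B y ^ p.toReal := by
      intro k
      rw [← volume_unitCube hr (k := k), ← setLIntegral_const]
      exact setLIntegral_mono' (measurableSet_unitCube k) fun y hy =>
        ENNReal.rpow_le_rpow (hsub k y hy) hpt0.le
    have hsum : (∑' k : Fin d → ℤ, A k ^ p.toReal) * ENNReal.ofReal r ^ d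
        ≤ ∫⁻ y, B y ^ p.toReal := by
      rw [lintegral_eq_tsum_cubes hr, ← ENNReal.tsum_mul_right]
      exact ENNReal.tsum_le_tsum key
    calc ENNReal.ofReal r ^ ((d : ℝ) * ((1 : ℝ≥0∞) / p).toReal) *
          (∑' k : Fin d → ℤ, A k ^ p.toReal) ^ (1 / p.toReal)
        = ((∑' k : Fin d → ℤ, A k ^ p.toReal) * ENNReal.ofReal r ^ d) ^ (1 / p.toReal) := by
          rw [ENNReal.mul_rpow_of_nonneg _ _ (by positivity),
            ← ENNReal.rpow_natCast (ENNReal.ofReal r) d, ← ENNReal.rpow_mul,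
            one_div_toReal, mul_comm, mul_one_div]
      _ ≤ (∫⁻ y, B y ^ p.toReal) ^ (1 / p.toReal) :=
          ENNReal.rpow_le_rpow hsum (by positivity)

end Steps

end FofanaProof
open FofanaProof in
/-- equivalence of the continuous and discrete generalized Fofana norms:
`C⁻¹ ‖f‖~_{(L^q,L^p)^φ} ≤ ‖f‖_{(L^q,L^p)^φ} ≤ C ‖f‖~_{(L^q,L^p)^φ}`. -/
theorem fofanaNorm_equiv_disc (d : ℕ) (q p : ℝ≥0∞) (hq : 1 ≤ q) (hqp : q ≤ p)
    (φ : ℝ → ℝ) (hφ : IsGqp d q p φ) :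
    ∃ C : ℝ, 0 < C ∧ ∀ f : Rd d → ℂ, Measurable f →
      ENNReal.ofReal C⁻¹ * fofanaNormDisc d f q p φ ≤ fofanaNorm d f q p φ ∧
        fofanaNorm d f q p φ ≤ ENNReal.ofReal C * fofanaNormDisc d f q p φ := by
  classical
  obtain ⟨C₁, hC₁pos, hC₁⟩ := hφ.almost_decreasing
  have hc1 : 1 ≤ Real.sqrt d + 1 := by
    have := Real.sqrt_nonneg (d : ℝ); linarith
  have hcpos : (0:ℝ) < Real.sqrt d + 1 := lt_of_lt_of_le one_pos hc1
  have hb1pos : (0:ℝ) < (Real.sqrt d + 1) ^ ((d : ℝ) * (1 / q).toReal) :=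
    Real.rpow_pos_of_pos hcpos _
  have h3pos : (0:ℝ) < 3 ^ d := by positivity
  refine ⟨3 ^ d + C₁ * (Real.sqrt d + 1) ^ ((d : ℝ) * (1 / q).toReal),
    by positivity, fun f hf => ?_⟩
  set C : ℝ := 3 ^ d + C₁ * (Real.sqrt d + 1) ^ ((d : ℝ) * (1 / q).toReal) with hCdef
  have hCpos : 0 < C := by positivity
  have hC3 : (3:ℝ) ^ d ≤ C := le_add_of_nonneg_right (by positivity)
  have hp1 : 1 ≤ p := hq.trans hqp
  have hGm : Measurable fun x : Rd d => (‖f x‖₊ : ℝ≥0∞) := hf.nnnorm.coe_nnreal_ennreal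
  have hcont : ∀ s : ℝ, contAmalgam d f q p s
      = contAmalgamE d (fun x => (‖f x‖₊ : ℝ≥0∞)) q p s := by
    intro s
    unfold contAmalgam contAmalgamE
    congr 1
    funext y
    rw [eLpNorm_eq_eLpNormE _ hq, enn_indicator_comm]
  have hdisc : ∀ s : ℝ, discAmalgam d f q p s
      = lpNormE (fun k => eLpNormE
          ((unitCube d s k).indicator fun x => (‖f x‖₊ : ℝ≥0∞)) q volume) p := by
    intro s
    unfold discAmalgam
    congr 1
    funext k
    rw [eLpNorm_eq_eLpNormE _ hq, enn_indicator_comm]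
  have h3dC : (3 ^ d : ℝ≥0∞) ≤ ENNReal.ofReal C := by
    calc (3 ^ d : ℝ≥0∞) = ENNReal.ofReal ((3:ℝ) ^ d) := by
          rw [ENNReal.ofReal_pow (by norm_num)]; norm_num
      _ ≤ ENNReal.ofReal C := ENNReal.ofReal_le_ofReal hC3
  constructor
  · -- `C⁻¹ ⬝ Disc ≤ Cont`
    have key : fofanaNormDisc d f q p φ ≤ ENNReal.ofReal C * fofanaNorm d f q p φ := by
      unfold fofanaNormDisc
      refine iSup_le fun x => ?_
      obtain ⟨r, hr⟩ := x
      show ENNReal.ofReal ((φ r)⁻¹ * r ^ (-(d : ℝ) * (1 / q).toReal)) *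
          discAmalgam d f q p r ≤ _
      have hRpos : 0 < r * (Real.sqrt d + 1) := by positivity
      have hrc : r ≤ r * (Real.sqrt d + 1) := le_mul_of_one_le_right hr.le hc1
      have hφr : 0 < φ r := hφ.pos r hr
      have hφR : 0 < φ (r * (Real.sqrt d + 1)) := hφ.pos _ hRpos
      -- the real weight inequality
      have hw : (φ r)⁻¹ * r ^ (-(d:ℝ) * (1 / q).toReal)
          ≤ C * ((φ (r * (Real.sqrt d + 1)))⁻¹ *
              (r * (Real.sqrt d + 1)) ^ ((d:ℝ) * (-(1 / q).toReal - (1 / p).toReal)) *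
              r ^ ((d:ℝ) * (1 / p).toReal)) := by
        have ha1 : (0:ℝ) < r ^ ((d:ℝ) * (1 / q).toReal) := Real.rpow_pos_of_pos hr _
        have ha2 : (0:ℝ) < r ^ ((d:ℝ) * (1 / p).toReal) := Real.rpow_pos_of_pos hr _
        have hb2 : (0:ℝ) < (Real.sqrt d + 1) ^ ((d:ℝ) * (1 / p).toReal) :=
          Real.rpow_pos_of_pos hcpos _
        have hkey : φ (r * (Real.sqrt d + 1)) *
            ((Real.sqrt d + 1) ^ ((d:ℝ) * (1 / q).toReal) *
              (Real.sqrt d + 1) ^ ((d:ℝ) * (1 / p).toReal)) ≤ C * φ r := by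
          have h := hC₁ r (r * (Real.sqrt d + 1)) hr hrc
          rw [Real.mul_rpow hr.le hcpos.le] at h
          have h2 : (Real.sqrt d + 1) ^ ((d:ℝ) * (1 / p).toReal) *
              φ (r * (Real.sqrt d + 1)) ≤ C₁ * φ r := by
            have h3 : r ^ ((d:ℝ) * (1 / p).toReal) *
                ((Real.sqrt d + 1) ^ ((d:ℝ) * (1 / p).toReal) * φ (r * (Real.sqrt d + 1)))
                ≤ r ^ ((d:ℝ) * (1 / p).toReal) * (C₁ * φ r) := by nlinarith [h]
            exact le_of_mul_le_mul_left h3 ha2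
          have h4 := mul_le_mul_of_nonneg_left h2 hb1pos.le
          rw [hCdef]
          nlinarith [mul_pos h3pos hφr]
        rw [show (-(d:ℝ) * (1 / q).toReal) = -((d:ℝ) * (1 / q).toReal) by ring,
          Real.rpow_neg hr.le,
          show ((d:ℝ) * (-(1 / q).toReal - (1 / p).toReal))
            = -((d:ℝ) * (1 / q).toReal + (d:ℝ) * (1 / p).toReal) by ring,
          Real.rpow_neg hRpos.le, Real.rpow_add hRpos,
          Real.mul_rpow hr.le hcpos.le, Real.mul_rpow hr.le hcpos.le,
          ← mul_inv]
        have hrhs : (φ (r * (Real.sqrt d + 1)))⁻¹ *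
              (r ^ ((d:ℝ) * (1 / q).toReal) * (Real.sqrt d + 1) ^ ((d:ℝ) * (1 / q).toReal) *
                (r ^ ((d:ℝ) * (1 / p).toReal) *
                  (Real.sqrt d + 1) ^ ((d:ℝ) * (1 / p).toReal)))⁻¹ *
              r ^ ((d:ℝ) * (1 / p).toReal)
            = (φ (r * (Real.sqrt d + 1)) * (r ^ ((d:ℝ) * (1 / q).toReal) *
                ((Real.sqrt d + 1) ^ ((d:ℝ) * (1 / q).toReal) *
                  (Real.sqrt d + 1) ^ ((d:ℝ) * (1 / p).toReal))))⁻¹ := by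
          field_simp
        rw [hrhs,
          show C * (φ (r * (Real.sqrt d + 1)) * (r ^ ((d:ℝ) * (1 / q).toReal) *
              ((Real.sqrt d + 1) ^ ((d:ℝ) * (1 / q).toReal) *
                (Real.sqrt d + 1) ^ ((d:ℝ) * (1 / p).toReal))))⁻¹
            = C / (φ (r * (Real.sqrt d + 1)) * (r ^ ((d:ℝ) * (1 / q).toReal) *
              ((Real.sqrt d + 1) ^ ((d:ℝ) * (1 / q).toReal) *
                (Real.sqrt d + 1) ^ ((d:ℝ) * (1 / p).toReal))))
            from (div_eq_mul_inv _ _).symm,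
          show (φ r * r ^ ((d:ℝ) * (1 / q).toReal))⁻¹
            = 1 / (φ r * r ^ ((d:ℝ) * (1 / q).toReal)) from (one_div _).symm,
          div_le_div_iff₀ (by positivity) (by positivity)]
        nlinarith [mul_le_mul_of_nonneg_right hkey ha1.le]
      -- pass to `ℝ≥0∞`
      have hwE : ENNReal.ofReal ((φ r)⁻¹ * r ^ (-(d:ℝ) * (1 / q).toReal))
          ≤ ENNReal.ofReal C *
            (ENNReal.ofReal ((φ (r * (Real.sqrt d + 1)))⁻¹ *
                (r * (Real.sqrt d + 1)) ^ ((d:ℝ) * (-(1 / q).toReal - (1 / p).toReal))) *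
              ENNReal.ofReal r ^ ((d:ℝ) * (1 / p).toReal)) := by
        rw [ENNReal.ofReal_rpow_of_pos hr,
          ← ENNReal.ofReal_mul (by positivity),
          ← ENNReal.ofReal_mul hCpos.le]
        exact ENNReal.ofReal_le_ofReal (by calc _ ≤ _ := hw
                                             _ = _ := by ring)
      rw [hdisc r]
      calc ENNReal.ofReal ((φ r)⁻¹ * r ^ (-(d : ℝ) * (1 / q).toReal)) *
            lpNormE (fun k => eLpNormE
              ((unitCube d r k).indicator fun x => (‖f x‖₊ : ℝ≥0∞)) q volume) p
          ≤ (ENNReal.ofReal C *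
              (ENNReal.ofReal ((φ (r * (Real.sqrt d + 1)))⁻¹ *
                  (r * (Real.sqrt d + 1)) ^ ((d:ℝ) * (-(1 / q).toReal - (1 / p).toReal))) *
                ENNReal.ofReal r ^ ((d:ℝ) * (1 / p).toReal))) *
            lpNormE (fun k => eLpNormE
              ((unitCube d r k).indicator fun x => (‖f x‖₊ : ℝ≥0∞)) q volume) p :=
            mul_le_mul_left hwE _
        _ = ENNReal.ofReal C *
            (ENNReal.ofReal ((φ (r * (Real.sqrt d + 1)))⁻¹ *
                (r * (Real.sqrt d + 1)) ^ ((d:ℝ) * (-(1 / q).toReal - (1 / p).toReal))) *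
              (ENNReal.ofReal r ^ ((d:ℝ) * (1 / p).toReal) *
                lpNormE (fun k => eLpNormE
                  ((unitCube d r k).indicator fun x => (‖f x‖₊ : ℝ≥0∞)) q volume) p)) := by
            ring
        _ ≤ ENNReal.ofReal C *
            (ENNReal.ofReal ((φ (r * (Real.sqrt d + 1)))⁻¹ *
                (r * (Real.sqrt d + 1)) ^ ((d:ℝ) * (-(1 / q).toReal - (1 / p).toReal))) *
              contAmalgamE d (fun x => (‖f x‖₊ : ℝ≥0∞)) q p (r * (Real.sqrt d + 1))) :=
            mul_le_mul_right (mul_le_mul_right (stepB hp1 hr _) _) _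
        _ ≤ ENNReal.ofReal C * fofanaNorm d f q p φ := by
            apply mul_le_mul_right
            rw [← hcont (r * (Real.sqrt d + 1))]
            exact le_iSup (fun s : {s : ℝ // 0 < s} =>
              ENNReal.ofReal ((φ s)⁻¹ *
                (s : ℝ) ^ ((d : ℝ) * (-(1 / q).toReal - (1 / p).toReal))) *
                contAmalgam d f q p s) ⟨r * (Real.sqrt d + 1), hRpos⟩
    calc ENNReal.ofReal C⁻¹ * fofanaNormDisc d f q p φ
        ≤ ENNReal.ofReal C⁻¹ * (ENNReal.ofReal C * fofanaNorm d f q p φ) :=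
          mul_le_mul_right key _
      _ = (ENNReal.ofReal C⁻¹ * ENNReal.ofReal C) * fofanaNorm d f q p φ :=
          (mul_assoc _ _ _).symm
      _ = fofanaNorm d f q p φ := by
          rw [← ENNReal.ofReal_mul (inv_nonneg.mpr hCpos.le), inv_mul_cancel₀ hCpos.ne',
            ENNReal.ofReal_one, one_mul]
  · -- `Cont ≤ C ⬝ Disc`
    unfold fofanaNorm
    refine iSup_le fun x => ?_
    obtain ⟨r, hr⟩ := x
    show ENNReal.ofReal ((φ r)⁻¹ *
        r ^ ((d : ℝ) * (-(1 / q).toReal - (1 / p).toReal))) * contAmalgam d f q p r ≤ _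
    have hφr : 0 < φ r := hφ.pos r hr
    have hweight : ENNReal.ofReal ((φ r)⁻¹ *
          r ^ ((d : ℝ) * (-(1 / q).toReal - (1 / p).toReal))) *
          ENNReal.ofReal r ^ ((d:ℝ) * (1 / p).toReal)
        = ENNReal.ofReal ((φ r)⁻¹ * r ^ (-(d : ℝ) * (1 / q).toReal)) := by
      rw [ENNReal.ofReal_rpow_of_pos hr, ← ENNReal.ofReal_mul (by positivity)]
      congr 1
      rw [mul_assoc, ← Real.rpow_add hr]
      congr 1
      ring
    rw [hcont r]
    calc ENNReal.ofReal ((φ r)⁻¹ *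
          r ^ ((d : ℝ) * (-(1 / q).toReal - (1 / p).toReal))) *
          contAmalgamE d (fun x => (‖f x‖₊ : ℝ≥0∞)) q p r
        ≤ ENNReal.ofReal ((φ r)⁻¹ *
            r ^ ((d : ℝ) * (-(1 / q).toReal - (1 / p).toReal))) *
            ((3 ^ d : ℝ≥0∞) * (ENNReal.ofReal r ^ ((d:ℝ) * (1 / p).toReal) *
              lpNormE (fun k => eLpNormE
                ((unitCube d r k).indicator fun x => (‖f x‖₊ : ℝ≥0∞)) q volume) p)) :=
          mul_le_mul_right (stepA hq hp1 hr hGm) _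
      _ = (3 ^ d : ℝ≥0∞) * ((ENNReal.ofReal ((φ r)⁻¹ *
            r ^ ((d : ℝ) * (-(1 / q).toReal - (1 / p).toReal))) *
            ENNReal.ofReal r ^ ((d:ℝ) * (1 / p).toReal)) *
            lpNormE (fun k => eLpNormE
              ((unitCube d r k).indicator fun x => (‖f x‖₊ : ℝ≥0∞)) q volume) p) := by
          ring
      _ = (3 ^ d : ℝ≥0∞) * (ENNReal.ofReal ((φ r)⁻¹ * r ^ (-(d : ℝ) * (1 / q).toReal)) *
            lpNormE (fun k => eLpNormE
              ((unitCube d r k).indicator fun x => (‖f x‖₊ : ℝ≥0∞)) q volume) p) := by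
          rw [hweight]
      _ ≤ ENNReal.ofReal C * fofanaNormDisc d f q p φ := by
          refine mul_le_mul' h3dC ?_
          rw [← hdisc r]
          exact le_iSup (fun s : {s : ℝ // 0 < s} =>
            ENNReal.ofReal ((φ s)⁻¹ * (s : ℝ) ^ (-(d : ℝ) * (1 / q).toReal)) *
              discAmalgam d f q p s) ⟨r, hr⟩
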